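/- For a prime p, the number of subgroups of index p^k in ℤ² equals (p^{k+1} - 1)/(p - 1). -/
import Mathlib


open AddSubgroup

/-- The HNF sublattice with column generators `(a, c)` and `(0, b)`. -/
def hnfLat (a b : ℕ) (c : ℤ) : AddSubgroup (ℤ × ℤ) where
  carrier := {q | ∃ t s : ℤ, q.1 = a * t ∧ q.2 = t * c + b * s}
  zero_mem' := ⟨0, 0, by simp, by simp⟩
  add_mem' := by
    rintro ⟨x, y⟩ ⟨x', y'⟩ ⟨t, s, ht, hs⟩ ⟨t', s', ht', hs'⟩
    have h1 : x = (a : ℤ) * t := ht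
    have h2 : y = t * c + (b : ℤ) * s := hs
    have h3 : x' = (a : ℤ) * t' := ht'
    have h4 : y' = t' * c + (b : ℤ) * s' := hs'
    exact ⟨t + t', s + s', by simp only [Prod.fst_add]; rw [h1, h3]; ring,
      by simp only [Prod.snd_add]; rw [h2, h4]; ring⟩
  neg_mem' := by
    rintro ⟨x, y⟩ ⟨t, s, ht, hs⟩
    have h1 : x = (a : ℤ) * t := ht
    have h2 : y = t * c + (b : ℤ) * s := hs
    exact ⟨-t, -s, by simp only [Prod.fst_neg]; rw [h1]; ring,
      by simp only [Prod.snd_neg]; rw [h2]; ring⟩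

lemma mem_hnfLat {a b : ℕ} {c x y : ℤ} :
    (x, y) ∈ hnfLat a b c ↔ ∃ t s : ℤ, x = a * t ∧ y = t * c + b * s := Iff.rfl

lemma index_hnfLat (a b : ℕ) (ha : 0 < a) (hb : 0 < b) (c : ℤ) :
    (hnfLat a b c).index = a * b := by
  haveI : NeZero b := ⟨hb.ne'⟩
  let φ : ℤ × ℤ →+ ℤ × ℤ :=
    { toFun := fun q => ((a : ℤ) * q.1, q.2)
      map_zero' := by simp
      map_add' := by intro q r; simp [Prod.ext_iff]; ring }
  have hrange : φ.range = (zmultiples (a : ℤ)).prod ⊤ := by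
    ext ⟨x, y⟩
    simp only [AddMonoidHom.mem_range, AddSubgroup.mem_prod, AddSubgroup.mem_top, and_true,
      Int.mem_zmultiples_iff, φ, AddMonoidHom.coe_mk, ZeroHom.coe_mk, Prod.mk.injEq, Prod.exists]
    constructor
    · rintro ⟨t, s, h1, h2⟩; exact ⟨t, h1.symm⟩
    · rintro ⟨t, h⟩; exact ⟨t, y, h.symm, rfl⟩
  have hle : hnfLat a b c ≤ φ.range := by
    rintro ⟨x, y⟩ ⟨t, s, ht, hs⟩
    exact ⟨(t, y), by simp only [φ, AddMonoidHom.coe_mk, ZeroHom.coe_mk]; rw [← ht]⟩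
  let ρ : ℤ × ℤ →+ ZMod b :=
    { toFun := fun q => (q.2 : ZMod b) - (q.1 : ZMod b) * (c : ZMod b)
      map_zero' := by simp
      map_add' := by intro q r; simp only [Prod.fst_add, Prod.snd_add]; push_cast; ring }
  have hcomap : (hnfLat a b c).comap φ = ρ.ker := by
    ext ⟨t, y⟩
    simp only [AddSubgroup.mem_comap, AddMonoidHom.mem_ker, φ, ρ, AddMonoidHom.coe_mk,
      ZeroHom.coe_mk]
    constructor
    · rintro ⟨t', s, ht', hs⟩
      have htt : t' = t :=
        (mul_left_cancel₀ (show (a : ℤ) ≠ 0 by exact_mod_cast ha.ne') ht'.symm)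
      subst htt
      have hy : y = t' * c + (b : ℤ) * s := hs
      rw [hy]
      push_cast
      rw [ZMod.natCast_self]
      ring
    · intro h
      have hd : (b : ℤ) ∣ y - t * c := by
        rw [← ZMod.intCast_zmod_eq_zero_iff_dvd]
        push_cast
        exact h
      obtain ⟨s, hs⟩ := hd
      exact ⟨t, s, rfl, by linarith⟩
  have hsurj : Function.Surjective ρ := by
    intro z
    obtain ⟨y, hy⟩ := ZMod.intCast_surjective (n := b) z
    exact ⟨(0, y), by simp [ρ, hy]⟩
  have h1 : (hnfLat a b c).relIndex φ.range = b := by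
    rw [← AddSubgroup.index_comap, hcomap, AddSubgroup.index_ker,
      AddMonoidHom.range_eq_top.mpr hsurj]
    have hcard : Nat.card (⊤ : AddSubgroup (ZMod b)) = Nat.card (ZMod b) :=
      Nat.card_congr AddSubgroup.topEquiv.toEquiv
    rw [hcard, Nat.card_zmod]
  have h2 : φ.range.index = a := by
    rw [hrange]
    simp [Int.index_zmultiples]
  rw [← AddSubgroup.relIndex_mul_index hle, h1, h2, mul_comm]

lemma int_addSubgroup_eq_zmultiples_nat (A : AddSubgroup ℤ) :
    ∃ n : ℕ, A = zmultiples (n : ℤ) := by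
  obtain ⟨g, hg⟩ := Int.subgroup_cyclic A
  refine ⟨g.natAbs, ?_⟩
  rw [hg, ← AddSubgroup.zmultiples_eq_closure]
  ext x
  simp [Int.mem_zmultiples_iff, Int.natAbs_dvd]

lemma exists_hnf (H : AddSubgroup (ℤ × ℤ)) (hH : H.index ≠ 0) :
    ∃ (a b : ℕ) (c : ℤ), 0 < a ∧ 0 < b ∧ 0 ≤ c ∧ c < b ∧ H = hnfLat a b c := by
  obtain ⟨a, hA⟩ := int_addSubgroup_eq_zmultiples_nat (H.map (AddMonoidHom.fst ℤ ℤ))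
  obtain ⟨b, hB⟩ := int_addSubgroup_eq_zmultiples_nat (H.comap (AddMonoidHom.inr ℤ ℤ))
  have hmem1 : ((H.index : ℤ), (0 : ℤ)) ∈ H := by
    have := AddSubgroup.nsmul_index_mem H ((1 : ℤ), (0 : ℤ))
    simpa using this
  have hmem2 : ((0 : ℤ), (H.index : ℤ)) ∈ H := by
    have := AddSubgroup.nsmul_index_mem H ((0 : ℤ), (1 : ℤ))
    simpa using this
  have hIa : (a : ℤ) ∣ (H.index : ℤ) := by
    rw [← Int.mem_zmultiples_iff, ← hA]
    exact ⟨((H.index : ℤ), (0 : ℤ)), hmem1, rfl⟩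
  have hIb : (b : ℤ) ∣ (H.index : ℤ) := by
    rw [← Int.mem_zmultiples_iff, ← hB]
    simpa [AddSubgroup.mem_comap] using hmem2
  have ha : 0 < a := by
    rcases Nat.eq_zero_or_pos a with h | h
    · subst h; simp at hIa; omega
    · exact h
  have hb : 0 < b := by
    rcases Nat.eq_zero_or_pos b with h | h
    · subst h; simp at hIb; omega
    · exact h
  -- find c₀ with (a, c₀) ∈ H
  have haA : (a : ℤ) ∈ H.map (AddMonoidHom.fst ℤ ℤ) := by
    rw [hA, Int.mem_zmultiples_iff]
  obtain ⟨⟨x, c₀⟩, hxH, hx⟩ := haA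
  have hx' : x = (a : ℤ) := hx
  subst hx'
  set c : ℤ := c₀ % b with hc
  have hc0 : 0 ≤ c := Int.emod_nonneg _ (by exact_mod_cast hb.ne')
  have hcb : c < b := Int.emod_lt_of_pos _ (by exact_mod_cast hb)
  have h0b : ((0 : ℤ), (b : ℤ)) ∈ H := by
    have : (b : ℤ) ∈ H.comap (AddMonoidHom.inr ℤ ℤ) := by
      rw [hB, Int.mem_zmultiples_iff]
    simpa [AddSubgroup.mem_comap] using this
  have hac : ((a : ℤ), c) ∈ H := by
    have : ((a : ℤ), c) = ((a : ℤ), c₀) + (-(c₀ / b)) • ((0 : ℤ), (b : ℤ)) := by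
      rw [Prod.ext_iff]
      constructor
      · simp
      · simp only [Prod.snd_add, Prod.smul_snd, smul_eq_mul]
        rw [hc, Int.emod_def]
        ring
    rw [this]
    exact H.add_mem hxH (H.zsmul_mem h0b _)
  refine ⟨a, b, c, ha, hb, hc0, hcb, ?_⟩
  ext ⟨x, y⟩
  constructor
  · intro hxy
    have hxA : x ∈ H.map (AddMonoidHom.fst ℤ ℤ) := ⟨(x, y), hxy, rfl⟩
    rw [hA, Int.mem_zmultiples_iff] at hxA
    obtain ⟨t, ht⟩ := hxA
    have hsub : ((0 : ℤ), y - t * c) ∈ H := by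
      have : ((0 : ℤ), y - t * c) = (x, y) + (-t) • ((a : ℤ), c) := by
        rw [Prod.ext_iff]
        constructor
        · simp only [Prod.fst_add, Prod.smul_fst, smul_eq_mul]
          rw [ht]; ring
        · simp only [Prod.snd_add, Prod.smul_snd, smul_eq_mul]
          ring
      rw [this]
      exact H.add_mem hxy (H.zsmul_mem hac _)
    have : y - t * c ∈ H.comap (AddMonoidHom.inr ℤ ℤ) := by
      simpa [AddSubgroup.mem_comap] using hsub
    rw [hB, Int.mem_zmultiples_iff] at this
    obtain ⟨s, hs⟩ := this
    exact ⟨t, s, ht, by linarith⟩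
  · rintro ⟨t, s, ht, hs⟩
    have ht2 : x = (a : ℤ) * t := ht
    have hs2 : y = t * c + (b : ℤ) * s := hs
    have hty : (x, y) = t • ((a : ℤ), c) + s • ((0 : ℤ), (b : ℤ)) := by
      rw [Prod.ext_iff]
      constructor
      · simp only [Prod.fst_add, Prod.smul_fst, smul_eq_mul]
        rw [ht2]; ring
      · simp only [Prod.snd_add, Prod.smul_snd, smul_eq_mul]
        rw [hs2]; ring
    rw [hty]
    exact H.add_mem (H.zsmul_mem hac _) (H.zsmul_mem h0b _)

lemma hnf_unique {a b a' b' : ℕ} {c c' : ℤ} (ha : 0 < a) (hb : 0 < b)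
    (ha' : 0 < a') (hb' : 0 < b') (hc0 : 0 ≤ c) (hcb : c < b) (hc0' : 0 ≤ c')
    (hcb' : c' < b') (h : hnfLat a b c = hnfLat a' b' c') :
    a = a' ∧ b = b' ∧ c = c' := by
  have hba : (0 : ℤ) ≠ a := by exact_mod_cast ha.ne
  have hba' : (0 : ℤ) ≠ a' := by exact_mod_cast ha'.ne
  -- b = b'
  have hbb' : b = b' := by
    have h1 : ((0 : ℤ), (b : ℤ)) ∈ hnfLat a' b' c' := h ▸ (⟨0, 1, by ring, by ring⟩ :
      ((0 : ℤ), (b : ℤ)) ∈ hnfLat a b c)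
    have h2 : ((0 : ℤ), (b' : ℤ)) ∈ hnfLat a b c := h.symm ▸ (⟨0, 1, by ring, by ring⟩ :
      ((0 : ℤ), (b' : ℤ)) ∈ hnfLat a' b' c')
    obtain ⟨t, s, hts, hss⟩ := h1
    obtain ⟨t', s', hts', hss'⟩ := h2
    have ht0 : t = 0 := by
      have := hts
      simp only at this
      rcases mul_eq_zero.mp this.symm with h | h
      · exact absurd h.symm hba'
      · exact h
    have ht0' : t' = 0 := by
      rcases mul_eq_zero.mp hts'.symm with h | h
      · exact absurd h.symm hba
      · exact h
    subst ht0; subst ht0'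
    simp only [zero_mul, zero_add] at hss hss'
    have d1 : (b' : ℤ) ∣ (b : ℤ) := ⟨s, hss⟩
    have d2 : (b : ℤ) ∣ (b' : ℤ) := ⟨s', hss'⟩
    have e1 : b' ∣ b := by exact_mod_cast d1
    have e2 : b ∣ b' := by exact_mod_cast d2
    exact Nat.dvd_antisymm e2 e1
  subst hbb'
  -- a = a'
  have g1 : ((a : ℤ), c) ∈ hnfLat a' b c' := h ▸ (⟨1, 0, by ring, by ring⟩ :
    ((a : ℤ), c) ∈ hnfLat a b c)
  have g2 : ((a' : ℤ), c') ∈ hnfLat a b c := h.symm ▸ (⟨1, 0, by ring, by ring⟩ :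
    ((a' : ℤ), c') ∈ hnfLat a' b c')
  obtain ⟨t, s, hts, hss⟩ := g1
  obtain ⟨t', s', hts', hss'⟩ := g2
  have d1 : (a' : ℤ) ∣ (a : ℤ) := ⟨t, hts⟩
  have d2 : (a : ℤ) ∣ (a' : ℤ) := ⟨t', hts'⟩
  have haa : a = a' := by
    have e1 : a' ∣ a := by exact_mod_cast d1
    have e2 : a ∣ a' := by exact_mod_cast d2
    exact Nat.dvd_antisymm e2 e1
  subst haa
  -- t = 1
  have ht1 : t = 1 := by
    have : (a : ℤ) * 1 = (a : ℤ) * t := by simpa using hts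
    exact (mul_left_cancel₀ (Ne.symm hba) this).symm
  subst ht1
  simp only [one_mul] at hss
  -- c = c'
  refine ⟨rfl, rfl, ?_⟩
  have hdiff : c - c' = (b : ℤ) * s := by linarith
  have hs0 : s = 0 := by
    have hb1 : (0 : ℤ) < b := by exact_mod_cast hb
    have hub : s ≤ 0 := by nlinarith
    have hlb : 0 ≤ s := by nlinarith
    omega
  rw [hs0] at hdiff
  linarith

/-- The number of subgroups of index `p^k` in `ℤ²` is `(p^{k+1} - 1)/(p - 1)`
(i.e. `1 + p + ⋯ + p^k`). -/
theorem stmt_6 (p : ℕ) (hp : p.Prime) (k : ℕ) :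
    Nat.card {H : AddSubgroup (ℤ × ℤ) // H.index = p ^ k} =
      (p ^ (k + 1) - 1) / (p - 1) := by
  have hp2 := hp.two_le
  let F : (Σ i : Fin (k + 1), Fin (p ^ (i : ℕ))) →
      {H : AddSubgroup (ℤ × ℤ) // H.index = p ^ k} :=
    fun x => ⟨hnfLat (p ^ (k - (x.1 : ℕ))) (p ^ (x.1 : ℕ)) ((x.2 : ℕ) : ℤ), by
      have hi : (x.1 : ℕ) ≤ k := by omega
      rw [index_hnfLat _ _ (pow_pos hp.pos _) (pow_pos hp.pos _), ← pow_add]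
      congr 1
      omega⟩
  have hbij : Function.Bijective F := by
    constructor
    · rintro ⟨i, c⟩ ⟨j, d⟩ h
      have h' : hnfLat (p ^ (k - (i : ℕ))) (p ^ (i : ℕ)) ((c : ℕ) : ℤ) =
          hnfLat (p ^ (k - (j : ℕ))) (p ^ (j : ℕ)) ((d : ℕ) : ℤ) := congrArg Subtype.val h
      obtain ⟨h1, h2, h3⟩ := hnf_unique (pow_pos hp.pos _) (pow_pos hp.pos _)
        (pow_pos hp.pos _) (pow_pos hp.pos _) (by positivity)
        (by exact_mod_cast c.isLt) (by positivity) (by exact_mod_cast d.isLt) h'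
      have hij : (i : ℕ) = (j : ℕ) := Nat.pow_right_injective hp2 h2
      have hij' : i = j := Fin.ext hij
      subst hij'
      have hcd : (c : ℕ) = (d : ℕ) := by exact_mod_cast h3
      rw [Fin.ext hcd]
    · rintro ⟨H, hH⟩
      have hne : H.index ≠ 0 := by rw [hH]; exact (pow_pos hp.pos k).ne'
      obtain ⟨a, b, c, ha, hb, hc0, hcb, hHL⟩ := exists_hnf H hne
      have hab : a * b = p ^ k := by
        rw [hHL, index_hnfLat a b ha hb c] at hH
        exact hH
      have hbdvd : b ∣ p ^ k := ⟨a, by rw [mul_comm]; exact hab.symm⟩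
      obtain ⟨i, hik, hbi⟩ := (Nat.dvd_prime_pow hp).mp hbdvd
      have hai : a = p ^ (k - i) := by
        have h1 : p ^ (k - i) * p ^ i = p ^ k := by
          rw [← pow_add]
          congr 1
          omega
        have h2 : a * p ^ i = p ^ (k - i) * p ^ i := by rw [h1, ← hbi, hab]
        exact Nat.eq_of_mul_eq_mul_right (pow_pos hp.pos i) h2
      have hclt : c.toNat < p ^ i := by
        have : c < ((p ^ i : ℕ) : ℤ) := by rw [← hbi]; exact hcb
        omega
      refine ⟨⟨⟨i, by omega⟩, ⟨c.toNat, hclt⟩⟩, ?_⟩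
      apply Subtype.ext
      show hnfLat (p ^ (k - i)) (p ^ i) ((c.toNat : ℕ) : ℤ) = H
      rw [hHL, hai, hbi]
      congr 1
      omega
  rw [← Nat.card_eq_of_bijective F hbij, Nat.card_eq_fintype_card, Fintype.card_sigma]
  simp only [Fintype.card_fin]
  rw [Fin.sum_univ_eq_sum_range, Nat.geomSum_eq hp2]
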